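/- arXiv:1608.06102 — 6 statements merged into one kernel-verified Lean document; each statement's English description precedes it below -/
import Mathlib

section
/- Let α ∈ (-1, -1/2) and set h(s) = 2α(1 - √(1+s)) - s/√(1+s). Then h(s) ≤ 0 for 0 ≤ s ≤ s_α and h(s) > 0 for s > s_α, where s_α = 1/(1+2α)² - 1 > 0. -/
theorem h_sign (α : ℝ) (hα₁ : -1 < α) (hα₂ : α < -(1/2)) :
    0 < 1 / (1 + 2*α)^2 - 1 ∧
    (∀ s : ℝ, 0 ≤ s → s ≤ 1 / (1 + 2*α)^2 - 1 →
      2*α * (1 - Real.sqrt (1 + s)) - s / Real.sqrt (1 + s) ≤ 0) ∧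
    (∀ s : ℝ, 1 / (1 + 2*α)^2 - 1 < s →
      0 < 2*α * (1 - Real.sqrt (1 + s)) - s / Real.sqrt (1 + s)) := by
  have hc : 1 + 2*α < 0 := by linarith
  have hc2 : 0 < (1 + 2*α)^2 := by nlinarith [mul_pos_of_neg_of_neg hc hc]
  have hc21 : (1 + 2*α)^2 < 1 := by nlinarith
  have h1 : 1 < 1 / (1 + 2*α)^2 := by rw [lt_div_iff₀ hc2]; nlinarith
  have hsetup : ∀ s : ℝ, 0 ≤ s →
      2*α * (1 - Real.sqrt (1 + s)) - s / Real.sqrt (1 + s)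
        = -((Real.sqrt (1 + s) - 1) * ((1 + 2*α) * Real.sqrt (1 + s) + 1))
            / Real.sqrt (1 + s) ∧
      1 ≤ Real.sqrt (1 + s) ∧ (Real.sqrt (1 + s))^2 = 1 + s := by
    intro s hs0
    have h1s : (0:ℝ) ≤ 1 + s := by linarith
    have ht2 : (Real.sqrt (1 + s))^2 = 1 + s := Real.sq_sqrt h1s
    have ht1 : 1 ≤ Real.sqrt (1 + s) := by
      have := Real.sqrt_le_sqrt (show (1:ℝ) ≤ 1 + s by linarith)
      simpa [Real.sqrt_one] using this
    have htpos : 0 < Real.sqrt (1 + s) := by linarith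
    refine ⟨?_, ht1, ht2⟩
    have hs : s = (Real.sqrt (1 + s))^2 - 1 := by linarith
    rw [hs]
    simp only [add_sub_cancel, Real.sqrt_sq htpos.le]
    field_simp
    ring
  refine ⟨by linarith, ?_, ?_⟩
  · intro s hs0 hs1
    obtain ⟨key, ht1, ht2⟩ := hsetup s hs0
    set t := Real.sqrt (1 + s) with ht
    have htpos : 0 < t := by linarith
    rw [key]
    apply div_nonpos_of_nonpos_of_nonneg _ (le_of_lt htpos)
    have hb : t^2 ≤ 1 / (1 + 2*α)^2 := by linarith
    have hb2 : ((1 + 2*α) * t)^2 ≤ 1 := by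
      have := mul_le_mul_of_nonneg_left hb (le_of_lt hc2)
      calc ((1 + 2*α) * t)^2 = (1 + 2*α)^2 * t^2 := by ring
        _ ≤ (1 + 2*α)^2 * (1 / (1 + 2*α)^2) := this
        _ = 1 := by field_simp [hc.ne]
    have hct : (1 + 2*α) * t + 1 ≥ 0 := by
      nlinarith [hb2, htpos, hc]
    nlinarith [ht1, hct]
  · intro s hs1
    have hs0 : 0 ≤ s := by linarith
    obtain ⟨key, ht1, ht2⟩ := hsetup s hs0
    set t := Real.sqrt (1 + s) with ht
    have htpos : 0 < t := by linarith
    rw [key]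
    apply div_pos _ htpos
    have hb : 1 / (1 + 2*α)^2 < t^2 := by linarith
    have hb2 : 1 < ((1 + 2*α) * t)^2 := by
      have := mul_lt_mul_of_pos_left hb hc2
      calc (1:ℝ) = (1 + 2*α)^2 * (1 / (1 + 2*α)^2) := by field_simp [hc.ne]
        _ < (1 + 2*α)^2 * t^2 := this
        _ = ((1 + 2*α) * t)^2 := by ring
    have hct : (1 + 2*α) * t + 1 < 0 := by
      nlinarith [hb2, mul_neg_of_neg_of_pos hc htpos]
    have ht1' : 1 < t := by nlinarith [hct, hc]
    nlinarith [ht1', hct]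
end

section
/- Let α ∈ (-1, -1/2) and ρ₀ = (-(1+2α)/3)^{3/2}. Then for all τ > 1, the cubic ω(τ) = 2ρ₀τ³ + (1+2α)τ² + 1 satisfies ω(τ) ≥ 0. -/
theorem omega_nonneg (α : ℝ) (hα₁ : -1 < α) (hα₂ : α < -(1/2))
    (ρ₀ : ℝ) (hρ₀ : ρ₀ = (-(1 + 2*α) / 3) ^ ((3:ℝ)/2)) (τ : ℝ) (hτ : 1 < τ) :
    0 ≤ 2*ρ₀*τ^3 + (1 + 2*α)*τ^2 + 1 := by
  have hc : (0:ℝ) ≤ -(1 + 2*α) / 3 := by linarith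
  set a := Real.sqrt (-(1 + 2*α) / 3) with ha
  have ha2 : a ^ 2 = -(1 + 2*α) / 3 := Real.sq_sqrt hc
  have ha0 : 0 ≤ a := Real.sqrt_nonneg _
  have hρ : ρ₀ = a ^ 3 := by
    rw [hρ₀, ha, Real.sqrt_eq_rpow, ← Real.rpow_natCast (_ ^ ((1:ℝ)/2)) 3,
      ← Real.rpow_mul hc]
    norm_num
  rw [hρ]
  have haτ : 0 ≤ a * τ := mul_nonneg ha0 (by linarith)
  have key : 0 ≤ (a*τ - 1)^2 * (2*a*τ + 1) := mul_nonneg (sq_nonneg _) (by linarith)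
  nlinarith [key, ha2]
end

section
/- Let α ∈ (-1, -1/2), ρ₀ = (-(1+2α)/3)^{3/2}, and h₀(s) = 2α(1-√(1+s)) - s/√(1+s) - ρ₀ s for s ≥ 0. Then h₀ is nonincreasing on [0,∞) and h₀(s) ≤ 0 for all s ≥ 0; consequently α(√(1+s)-1)² + s - s/√(1+s) ≤ [1 + α + (-(1+2α)/3)^{3/2}]·s for all s ≥ 0. -/
theorem h0_props (α : ℝ) (hα₁ : -1 < α) (hα₂ : α < -(1/2))
    (ρ₀ : ℝ) (hρ₀ : ρ₀ = (-(1 + 2*α) / 3) ^ ((3:ℝ)/2)) :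
    AntitoneOn (fun s : ℝ => 2*α * (1 - Real.sqrt (1 + s)) - s / Real.sqrt (1 + s) - ρ₀ * s)
      (Set.Ici 0) ∧
    (∀ s : ℝ, 0 ≤ s →
      2*α * (1 - Real.sqrt (1 + s)) - s / Real.sqrt (1 + s) - ρ₀ * s ≤ 0) ∧
    (∀ s : ℝ, 0 ≤ s →
      α * (Real.sqrt (1 + s) - 1) ^ 2 + s - s / Real.sqrt (1 + s)
        ≤ (1 + α + (-(1 + 2*α) / 3) ^ ((3:ℝ)/2)) * s) := by
  have hc : (0:ℝ) < -(1 + 2*α)/3 := by linarith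
  set w := Real.sqrt (-(1 + 2*α)/3) with hwdef
  have hw0 : 0 ≤ w := Real.sqrt_nonneg _
  have hw2 : w^2 = -(1 + 2*α)/3 := Real.sq_sqrt hc.le
  have hρw : ρ₀ = w^3 := by
    rw [hρ₀, hwdef, Real.sqrt_eq_rpow, ← Real.rpow_natCast (((-(1 + 2*α)/3)) ^ ((1:ℝ)/2)) 3,
      ← Real.rpow_mul hc.le]
    norm_num
  -- derivative
  have hder : ∀ x : ℝ, 0 < x →
      HasDerivAt (fun s : ℝ => 2*α * (1 - Real.sqrt (1 + s)) - s / Real.sqrt (1 + s) - ρ₀ * s)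
        (-α / Real.sqrt (1+x) - (x+2)/(2 * Real.sqrt (1+x)^3) - ρ₀) x := by
    intro x hx
    have h1x : (0:ℝ) < 1 + x := by linarith
    have hu : 0 < Real.sqrt (1+x) := Real.sqrt_pos.2 h1x
    have hsq2 : Real.sqrt (1+x)^2 = 1+x := Real.sq_sqrt h1x.le
    have hsq : HasDerivAt (fun s : ℝ => Real.sqrt (1+s)) (1/(2*Real.sqrt (1+x))) x := by
      have h := (Real.hasDerivAt_sqrt (by positivity : (1:ℝ)+x ≠ 0)).comp x
        ((hasDerivAt_id x).const_add 1)
      simpa [Function.comp_def] using h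
    have h2 : HasDerivAt (fun s : ℝ => 2*α*(1 - Real.sqrt (1+s)))
        (2*α * (0 - 1/(2*Real.sqrt (1+x)))) x :=
      ((hasDerivAt_const x (1:ℝ)).sub hsq).const_mul _
    have h3 : HasDerivAt (fun s : ℝ => s / Real.sqrt (1+s))
        ((1 * Real.sqrt (1+x) - x * (1/(2*Real.sqrt (1+x)))) / Real.sqrt (1+x)^2) x :=
      (hasDerivAt_id x).div hsq hu.ne'
    have h4 : HasDerivAt (fun s : ℝ => ρ₀ * s) ρ₀ x := by
      simpa using (hasDerivAt_id x).const_mul ρ₀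
    have h := (h2.sub h3).sub h4
    refine h.congr_deriv ?_
    field_simp
    linear_combination (-2) * hsq2
  have key : AntitoneOn (fun s : ℝ => 2*α * (1 - Real.sqrt (1 + s)) - s / Real.sqrt (1 + s) - ρ₀ * s)
      (Set.Ici 0) := by
    apply antitoneOn_of_deriv_nonpos (convex_Ici 0)
    · apply ContinuousOn.sub
      apply ContinuousOn.sub
      · exact (Continuous.continuousOn (by continuity))
      · apply ContinuousOn.div continuousOn_id
        · exact (Continuous.continuousOn (by continuity))
        · intro x hx
          have : (0:ℝ) < 1 + x := by simp at hx; linarith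
          exact (Real.sqrt_pos.2 this).ne'
      · exact (Continuous.continuousOn (by continuity))
    · intro x hx
      rw [interior_Ici] at hx
      exact (hder x hx).differentiableAt.differentiableWithinAt
    · intro x hx
      rw [interior_Ici] at hx
      have hx' : (0:ℝ) < x := hx
      rw [(hder x hx').deriv]
      have h1x : (0:ℝ) < 1 + x := by linarith
      set u := Real.sqrt (1+x) with hudef
      have hu : 0 < u := Real.sqrt_pos.2 h1x
      have hsq2 : u^2 = 1+x := Real.sq_sqrt h1x.le
      rw [hρw]
      have heq : -α / u - (x+2)/(2*u^3) - w^3 = (3*w^2*u^2 - 1 - 2*w^3*u^3)/(2*u^3) := by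
        field_simp
        linear_combination hsq2 - 3*u^2*hw2
      rw [heq]
      apply div_nonpos_of_nonpos_of_nonneg
      · nlinarith [mul_nonneg (sq_nonneg (w*u - 1)) (by positivity : (0:ℝ) ≤ 2*w*u + 1)]
      · positivity
  refine ⟨key, ?_, ?_⟩
  · intro s hs
    have h0 : (2*α * (1 - Real.sqrt (1 + 0)) - 0 / Real.sqrt (1 + 0) - ρ₀ * 0) = 0 := by
      simp
    have := key (Set.self_mem_Ici) (Set.mem_Ici.2 hs) hs
    simp only [add_zero, Real.sqrt_one] at this ⊢
    linarith [this]
  · intro s hs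
    have h1s : (0:ℝ) < 1 + s := by linarith
    have hsq2 : Real.sqrt (1+s)^2 = 1+s := Real.sq_sqrt h1s.le
    have h2 : 2*α * (1 - Real.sqrt (1 + s)) - s / Real.sqrt (1 + s) - ρ₀ * s ≤ 0 := by
      have := key (Set.self_mem_Ici) (Set.mem_Ici.2 hs) hs
      simp only [add_zero, Real.sqrt_one] at this
      simpa using this
    rw [← hρ₀]
    nlinarith [hsq2, h2]
end

section
/- Let β ∈ (-1, 0) and g(s) = β·(s - ln(1+s)) + s²/(1+s) for s > 0. Then g(s) < (1 + β/2)²·s for all s > 0. -/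
lemma two_log_lt (x : ℝ) (hx : 1 < x) : 2 * Real.log x < x - 1/x := by
  have key : StrictMonoOn (fun y : ℝ => y - 1/y - 2 * Real.log y) (Set.Ici 1) := by
    apply strictMonoOn_of_deriv_pos (convex_Ici 1)
    · apply ContinuousOn.sub
      · apply ContinuousOn.sub continuousOn_id
        exact ContinuousOn.div continuousOn_const continuousOn_id
          (fun y hy => by simp at hy; positivity)
      · exact continuousOn_const.mul (Real.continuousOn_log.mono
          (fun y hy => by simp at hy ⊢; positivity))
    · intro y hy
      rw [interior_Ici] at hy
      have hy1 : (1:ℝ) < y := hy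
      have hy0 : y ≠ 0 := by linarith
      have hd : HasDerivAt (fun y : ℝ => y - 1/y - 2 * Real.log y)
          (1 - (-(1/y^2)) - 2 * (1/y)) y := by
        have h1 : HasDerivAt (fun y : ℝ => 1/y) (-(1/y^2)) y := by
          simpa [one_div] using (hasDerivAt_inv hy0)
        have h2 : HasDerivAt (fun y : ℝ => 2 * Real.log y) (2 * (1/y)) y := by
          simpa [one_div] using (Real.hasDerivAt_log hy0).const_mul 2
        exact ((hasDerivAt_id y).sub h1).sub h2
      rw [hd.deriv]
      have h1 : (0:ℝ) < y := by linarith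
      have h2 : 1 - (-(1/y^2)) - 2 * (1/y) = (1 - 1/y)^2 := by
        field_simp; ring
      rw [h2]
      have h3 : 1/y < 1 := by rw [div_lt_one h1]; exact hy1
      nlinarith [sq_nonneg (1 - 1/y)]
  have h0 : (fun y : ℝ => y - 1/y - 2 * Real.log y) 1 = 0 := by norm_num
  have := key (Set.self_mem_Ici) (Set.mem_Ici.mpr hx.le) hx
  rw [h0] at this
  simp only at this
  linarith

lemma log_sq_lt (s : ℝ) (hs : 0 < s) : (Real.log (1 + s))^2 < s^2 / (1 + s) := by
  set x := Real.sqrt (1 + s) with hx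
  have h1s : (0:ℝ) < 1 + s := by linarith
  have hx2 : x^2 = 1 + s := Real.sq_sqrt h1s.le
  have hx1 : 1 < x := by
    nlinarith [Real.sqrt_nonneg (1+s)]
  have hx0 : (0:ℝ) < x := by linarith
  have hlog : Real.log (1 + s) = 2 * Real.log x := by
    rw [← hx2, Real.log_pow]; push_cast; ring
  have hkey : 2 * Real.log x < x - 1/x := two_log_lt x hx1
  have hpos : 0 < Real.log (1 + s) := Real.log_pos (by linarith)
  have hxval : x - 1/x = s / x := by field_simp; nlinarith
  have hlt : Real.log (1 + s) < s / x := by rw [hlog, ← hxval]; exact hkey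
  have : (Real.log (1 + s))^2 < (s / x)^2 := by
    exact pow_lt_pow_left₀ hlt hpos.le (by norm_num) |>.trans_le (le_refl _) |>.trans_le (le_refl _)
  calc (Real.log (1 + s))^2 < (s / x)^2 := this
    _ = s^2 / (1 + s) := by rw [div_pow, hx2]

theorem g_lt_sat (β : ℝ) (hβ₁ : -1 < β) (hβ₂ : β < 0) (s : ℝ) (hs : 0 < s) :
    β * (s - Real.log (1 + s)) + s^2 / (1 + s) < (1 + β/2)^2 * s := by
  set L := Real.log (1 + s) with hL
  set A := s^2 / (1 + s) with hA
  have h1s : (0:ℝ) < 1 + s := by linarith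
  have hAeq : A * (1 + s) = s^2 := by
    rw [hA]; field_simp
  have hL2 : L^2 < A := log_sq_lt s hs
  nlinarith [sq_nonneg (L + β*s/2), hs, hAeq, hL2, mul_pos hs h1s]
end

section
/- Define f(s) = ((1 - 1/(1+s))·s)/(s - ln(1+s)) for s > 0. Then f is strictly decreasing on (0,∞). -/
open Real Set

lemma log_pade (s : ℝ) (hs : 0 < s) : 2*s/(s+2) < Real.log (1+s) := by
  have key : StrictMonoOn (fun x : ℝ => Real.log (1+x) - 2*x/(x+2)) (Set.Ici 0) := by
    apply strictMonoOn_of_deriv_pos (convex_Ici 0)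
    · apply ContinuousOn.sub
      · apply ContinuousOn.log (by fun_prop)
        intro x hx; simp only [mem_Ici] at hx; positivity
      · apply ContinuousOn.div (by fun_prop) (by fun_prop)
        intro x hx; simp only [mem_Ici] at hx; positivity
    · intro x hx
      rw [interior_Ici] at hx
      simp only [mem_Ioi] at hx
      have h1 : (1:ℝ)+x ≠ 0 := by positivity
      have h2 : x+2 ≠ 0 := by positivity
      have hd1 : HasDerivAt (fun y : ℝ => Real.log (1+y)) (1/(1+x)) x := by
        have := (Real.hasDerivAt_log h1).comp x
          ((hasDerivAt_id x).const_add 1)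
        simpa [one_div, Function.comp_def] using this
      have hd2 : HasDerivAt (fun y : ℝ => 2*y/(y+2))
          ((2*(x+2) - 2*x*1)/(x+2)^2) x := by
        simpa [Pi.div_def] using ((hasDerivAt_id x).const_mul 2).div ((hasDerivAt_id x).add_const 2) h2
      rw [HasDerivAt.deriv (f := fun x : ℝ => Real.log (1+x) - 2*x/(x+2)) (hd1.sub hd2)]
      rw [div_sub_div _ _ h1 (pow_ne_zero 2 h2)]
      apply div_pos
      · nlinarith
      · positivity
  have h := key Set.self_mem_Ici (le_of_lt hs) hs
  simp only [Real.log_one] at h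
  have : Real.log (1+0) - 2*0/(0+2) = 0 := by norm_num
  rw [this] at h
  linarith [h]

theorem f_sat_strictAntiOn :
    StrictAntiOn (fun s : ℝ => ((1 - 1 / (1 + s)) * s) / (s - Real.log (1 + s)))
      (Set.Ioi 0) := by
  apply strictAntiOn_of_deriv_neg (convex_Ioi 0)
  · apply ContinuousOn.div
    · apply ContinuousOn.mul _ continuousOn_id
      apply ContinuousOn.sub continuousOn_const
      apply ContinuousOn.div continuousOn_const (by fun_prop)
      intro x hx; simp only [mem_Ioi] at hx; positivity
    · apply ContinuousOn.sub continuousOn_id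
      apply ContinuousOn.log (by fun_prop)
      intro x hx; simp only [mem_Ioi] at hx; positivity
    · intro x hx
      simp only [mem_Ioi] at hx
      have := Real.log_lt_sub_one_of_pos (x := 1+x) (by positivity) (by nlinarith)
      simp only [add_sub_cancel_left] at this
      linarith
  · intro x hx
    rw [interior_Ioi] at hx
    simp only [mem_Ioi] at hx
    have h1 : (1:ℝ)+x ≠ 0 := by positivity
    have h1' : (0:ℝ) < 1+x := by positivity
    have hL : Real.log (1+x) < x := by
      have := Real.log_lt_sub_one_of_pos (x := 1+x) (by positivity) (by nlinarith)
      simpa using this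
    have hD : (0:ℝ) < x - Real.log (1+x) := by linarith
    have hDne : x - Real.log (1+x) ≠ 0 := ne_of_gt hD
    -- derivative of numerator
    have hdN : HasDerivAt (fun s : ℝ => (1 - 1/(1+s)) * s)
        ((0 - (0 * (1+x) - 1 * 1)/(1+x)^2) * x + (1 - 1/(1+x)) * 1) x := by
      apply HasDerivAt.mul _ (hasDerivAt_id x)
      apply HasDerivAt.sub (hasDerivAt_const x 1)
      exact (hasDerivAt_const x 1).div ((hasDerivAt_id x).const_add 1) h1
    have hdlog : HasDerivAt (fun s : ℝ => Real.log (1+s)) (1/(1+x)) x := by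
      have := (Real.hasDerivAt_log h1).comp x ((hasDerivAt_id x).const_add 1)
      simpa [one_div, Function.comp_def] using this
    have hdD : HasDerivAt (fun s : ℝ => s - Real.log (1+s)) (1 - 1/(1+x)) x :=
      (hasDerivAt_id x).sub hdlog
    have hdf := hdN.div hdD hDne
    rw [HasDerivAt.deriv (f := fun s : ℝ => ((1 - 1/(1+s)) * s) / (s - Real.log (1+s))) hdf]
    apply div_neg_of_neg_of_pos
    · have hpade := log_pade x hx
      rw [div_lt_iff₀ (by positivity)] at hpade
      have key : ((0 - (0 * (1 + x) - 1 * 1) / (1 + x) ^ 2) * x + (1 - 1 / (1 + x)) * 1) * (x - Real.log (1 + x)) -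
          (1 - 1 / (1 + x)) * x * (1 - 1 / (1 + x))
          = ((x^2 + 2*x) * (x - Real.log (1+x)) - x^3) / (1+x)^2 := by
        field_simp
        ring
      rw [key]
      apply div_neg_of_neg_of_pos _ (by positivity)
      nlinarith [hpade]
    · positivity
end

section
/- The function η(s) = 4 - 2((1+s)/s)·ln(1+s) - (2+s)/(1+s) satisfies η(s) < 0 for all s > 0. -/
lemma log_lower_aux (s : ℝ) (hs : 0 < s) : 2 * s / (2 + s) < Real.log (1 + s) := by
  set f : ℝ → ℝ := fun x => Real.log (1 + x) - 2 * x / (2 + x) with hf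
  have hd : ∀ x : ℝ, 0 ≤ x → HasDerivAt f (1 / (1 + x) - 4 / (2 + x) ^ 2) x := by
    intro x hx
    have h1 : HasDerivAt (fun x : ℝ => Real.log (1 + x)) (1 / (1 + x)) x := by
      have hne : (1 : ℝ) + x ≠ 0 := by positivity
      have := (Real.hasDerivAt_log hne).comp x ((hasDerivAt_id x).const_add 1)
      simpa [one_div, Function.comp_def] using this
    have h2 : HasDerivAt (fun x : ℝ => 2 * x / (2 + x)) (4 / (2 + x) ^ 2) x := by
      have hne : (2 : ℝ) + x ≠ 0 := by positivity
      have h3 : HasDerivAt (fun x : ℝ => 2 * x) 2 x := by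
        simpa using (hasDerivAt_id x).const_mul 2
      have h4 : HasDerivAt (fun x : ℝ => 2 + x) 1 x := (hasDerivAt_id x).const_add 2
      have := h3.div h4 hne
      rw [show (4:ℝ) / (2 + x) ^ 2 = (2 * (2 + x) - 2 * x * 1) / (2 + x) ^ 2 by ring]
      exact this
    simpa [hf, Pi.sub_def] using h1.sub h2
  have hmono : StrictMonoOn f (Set.Ici (0 : ℝ)) := by
    apply strictMonoOn_of_deriv_pos (convex_Ici 0)
    · exact fun x hx => ((hd x hx).continuousAt).continuousWithinAt
    · intro x hx
      rw [interior_Ici] at hx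
      have hx' : (0 : ℝ) < x := hx
      rw [(hd x hx'.le).deriv]
      have h1 : (0:ℝ) < 1 + x := by linarith
      have h2 : (0:ℝ) < 2 + x := by linarith
      rw [sub_pos, div_lt_div_iff₀ (by positivity) h1]
      nlinarith
  have h0 : f 0 < f s := hmono (Set.self_mem_Ici) (Set.mem_Ici.2 hs.le) hs
  simpa [hf] using h0

theorem eta_neg (s : ℝ) (hs : 0 < s) :
    4 - 2 * ((1 + s) / s) * Real.log (1 + s) - (2 + s) / (1 + s) < 0 := by
  have h1 : (0:ℝ) < 1 + s := by linarith
  have h2 : (0:ℝ) < 2 + s := by linarith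
  have hL := log_lower_aux s hs
  set L := Real.log (1 + s) with hLdef
  have key : 2 * s + 3 * s ^ 2 < 2 * (1 + s) ^ 2 * L := by
    have h3 : 2 * s / (2 + s) * (2 + s) < L * (2 + s) := by
      exact mul_lt_mul_of_pos_right hL h2
    rw [div_mul_cancel₀ _ h2.ne'] at h3
    nlinarith [sq_nonneg s, mul_pos hs hs]
  have heq : 4 - 2 * ((1 + s) / s) * L - (2 + s) / (1 + s)
      = (4 * s * (1 + s) - 2 * (1 + s) ^ 2 * L - s * (2 + s)) / (s * (1 + s)) := by
    field_simp
  rw [heq]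
  apply div_neg_of_neg_of_pos
  · nlinarith
  · positivity
end
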